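/- arXiv:1312.7646 — 3 statements merged into one kernel-verified Lean document; each statement's English description precedes it below -/
import Mathlib

section
/- For nonnegative integers k, ℓ, n with ℓ ≤ n and k ≤ n, the sum ∑_{p=0}^{ℓ} C(k,p) · 3^p · C(n-k, ℓ-p) is at most (ℓ+1) · 3^{λℓ+1} · C(n,ℓ), where λ = 3k/(n+2k). -/
open Finset Real

lemma nat_N1 (n ℓ j : ℕ) (hj : j + 1 ≤ ℓ) (hn : ℓ ≤ n) :
    n.choose j * (n - ℓ) ≤ n.choose (j + 1) * ℓ := by
  clear hn
  have key : n.choose j * (n - ℓ) * (j + 1) ≤ n.choose (j + 1) * ℓ * (j + 1) := by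
    have h1 : n.choose (j+1) * (j+1) = n.choose j * (n - j) := Nat.choose_succ_right_eq n j
    calc n.choose j * (n - ℓ) * (j + 1) ≤ n.choose j * ((n - j) * ℓ) := by
          have : (n - ℓ) * (j+1) ≤ (n - j) * ℓ :=
            Nat.mul_le_mul (Nat.sub_le_sub_left (le_trans (Nat.le_succ j) hj) n) hj
          calc n.choose j * (n - ℓ) * (j + 1) = n.choose j * ((n - ℓ) * (j+1)) := by ring
            _ ≤ n.choose j * ((n - j) * ℓ) := Nat.mul_le_mul_left _ this
      _ = n.choose (j+1) * ℓ * (j + 1) := by rw [← mul_assoc, ← h1]; ring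
  exact Nat.le_of_mul_le_mul_right key (Nat.succ_pos j)

lemma nat_N2 (n ℓ j : ℕ) (hj : ℓ ≤ j) (hn : ℓ ≤ n) :
    n.choose (j + 1) * (ℓ + 1) ≤ n.choose j * (n - ℓ) := by
  clear hn
  rcases le_or_gt n j with h | h
  · rw [Nat.choose_eq_zero_of_lt (by omega)]; simp
  · have h1 : n.choose (j+1) * (j+1) = n.choose j * (n - j) := Nat.choose_succ_right_eq n j
    calc n.choose (j+1) * (ℓ+1) ≤ n.choose (j+1) * (j+1) :=
          Nat.mul_le_mul_left _ (by omega)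
      _ = n.choose j * (n - j) := h1
      _ ≤ n.choose j * (n - ℓ) := Nat.mul_le_mul_left _ (Nat.sub_le_sub_left hj n)

lemma step5 (n ℓ : ℕ) (h1 : 1 ≤ ℓ) (h2 : ℓ < n) :
    (n : ℝ) ^ n ≤ 3 * ((ℓ : ℝ) + 1) * (n.choose ℓ : ℝ) * (ℓ : ℝ) ^ ℓ *
      ((n - ℓ : ℕ) : ℝ) ^ (n - ℓ) := by
  set b : ℕ → ℕ := fun j => n.choose j * ℓ ^ j * (n - ℓ) ^ (n - j) with hb
  have hsum : (n : ℕ) ^ n = ∑ j ∈ Finset.range (n + 1), b j := by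
    have := add_pow ℓ (n - ℓ) n
    rw [Nat.add_sub_cancel' (le_of_lt h2)] at this
    rw [this]
    exact Finset.sum_congr rfl fun j _ => by push_cast [hb]; ring
  have hstep : ∀ j, j + 1 ≤ ℓ → b j ≤ b (j + 1) := by
    intro j hj
    have hnj : n - j = (n - (j+1)) + 1 := by omega
    calc b j = (n.choose j * (n - ℓ)) * (ℓ ^ j * (n - ℓ) ^ (n - (j+1))) := by
          simp only [hb]; rw [hnj, pow_succ]; ring
      _ ≤ (n.choose (j+1) * ℓ) * (ℓ ^ j * (n - ℓ) ^ (n - (j+1))) :=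
          Nat.mul_le_mul_right _ (nat_N1 n ℓ j hj (le_of_lt h2))
      _ = b (j + 1) := by simp only [hb]; rw [pow_succ]; ring
  have hD : ∀ d j, j + d = ℓ → b j ≤ b ℓ := by
    intro d
    induction d with
    | zero => intro j hj; rw [show j = ℓ by omega]
    | succ d ih => intro j hj; exact le_trans (hstep j (by omega)) (ih (j+1) (by omega))
  -- tail step (nat) : (ℓ+1) * b (j+1) ≤ ℓ * b j for ℓ ≤ j
  have hN2 : ∀ j, ℓ ≤ j → b (j + 1) * (ℓ + 1) ≤ b j * ℓ := by
    intro j hj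
    rcases le_or_gt n j with h | h
    · have : n.choose (j+1) = 0 := Nat.choose_eq_zero_of_lt (by omega)
      simp [hb, this]
    · have hnj : n - j = (n - (j+1)) + 1 := by omega
      calc b (j+1) * (ℓ+1) = (n.choose (j+1) * (ℓ+1)) * (ℓ ^ j * (n - ℓ) ^ (n - (j+1))) * ℓ := by
            simp only [hb]; rw [pow_succ]; ring
        _ ≤ (n.choose j * (n - ℓ)) * (ℓ ^ j * (n - ℓ) ^ (n - (j+1))) * ℓ :=
            Nat.mul_le_mul_right _ (Nat.mul_le_mul_right _ (nat_N2 n ℓ j hj (le_of_lt h2)))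
        _ = b j * ℓ := by simp only [hb]; rw [hnj, pow_succ]; ring
  set r : ℝ := (ℓ : ℝ) / ((ℓ : ℝ) + 1) with hr
  have hℓpos : (0:ℝ) < (ℓ:ℝ) + 1 := by positivity
  have hr0 : 0 ≤ r := by positivity
  have hU : ∀ m, (b (ℓ + m) : ℝ) ≤ (b ℓ : ℝ) * r ^ m := by
    intro m
    induction m with
    | zero => simp
    | succ m ih =>
      have key : ((b (ℓ + m + 1) : ℝ)) * ((ℓ:ℝ) + 1) ≤ (b (ℓ + m) : ℝ) * ℓ := by
        exact_mod_cast hN2 (ℓ + m) (Nat.le_add_right ℓ m)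
      have : (b (ℓ + m + 1) : ℝ) ≤ (b (ℓ + m) : ℝ) * r := by
        rw [hr, mul_div_assoc']
        rw [le_div_iff₀ hℓpos]
        linarith
      calc (b (ℓ + (m+1)) : ℝ) = (b (ℓ + m + 1) : ℝ) := by ring_nf
        _ ≤ (b (ℓ + m) : ℝ) * r := this
        _ ≤ ((b ℓ : ℝ) * r ^ m) * r := mul_le_mul_of_nonneg_right ih hr0
        _ = (b ℓ : ℝ) * r ^ (m+1) := by ring
  -- geometric sum bound
  have hgeo : ∀ M, ∑ m ∈ Finset.range M, r ^ m ≤ (ℓ : ℝ) + 1 := by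
    intro M
    induction M with
    | zero => simp; positivity
    | succ M ih =>
      rw [geom_sum_succ]
      have : r * ((ℓ:ℝ)+1) = ℓ := by rw [hr]; field_simp
      calc r * ∑ m ∈ Finset.range M, r ^ m + 1 ≤ r * ((ℓ:ℝ)+1) + 1 := by
            have := mul_le_mul_of_nonneg_left ih hr0; linarith
        _ = (ℓ:ℝ) + 1 := by rw [this]
  -- split the sum
  have hsplit : ∑ j ∈ Finset.range (n + 1), (b j : ℝ)
      = (∑ j ∈ Finset.range ℓ, (b j : ℝ)) + ∑ j ∈ Finset.Ico ℓ (n+1), (b j : ℝ) := by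
    rw [Finset.range_eq_Ico]
    rw [← Finset.sum_Ico_consecutive (fun j => ((b j : ℝ))) (Nat.zero_le ℓ) (show ℓ ≤ n+1 by omega)]
    rw [Finset.range_eq_Ico]
  have hlow : ∑ j ∈ Finset.range ℓ, (b j : ℝ) ≤ (ℓ : ℝ) * (b ℓ : ℝ) := by
    calc ∑ j ∈ Finset.range ℓ, (b j : ℝ) ≤ ∑ _j ∈ Finset.range ℓ, (b ℓ : ℝ) := by
          apply Finset.sum_le_sum
          intro j hj
          have hj' := Finset.mem_range.mp hj
          exact_mod_cast hD (ℓ - j) j (by omega)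
      _ = (ℓ : ℝ) * (b ℓ : ℝ) := by rw [Finset.sum_const, Finset.card_range]; ring
  have hhigh : ∑ j ∈ Finset.Ico ℓ (n+1), (b j : ℝ) ≤ ((ℓ:ℝ) + 1) * (b ℓ : ℝ) := by
    rw [Finset.sum_Ico_eq_sum_range]
    calc ∑ m ∈ Finset.range (n + 1 - ℓ), (b (ℓ + m) : ℝ)
        ≤ ∑ m ∈ Finset.range (n + 1 - ℓ), (b ℓ : ℝ) * r ^ m :=
          Finset.sum_le_sum fun m _ => hU m
      _ = (b ℓ : ℝ) * ∑ m ∈ Finset.range (n + 1 - ℓ), r ^ m := by rw [Finset.mul_sum]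
      _ ≤ (b ℓ : ℝ) * ((ℓ:ℝ) + 1) := by
          exact mul_le_mul_of_nonneg_left (hgeo _) (Nat.cast_nonneg _)
      _ = ((ℓ:ℝ) + 1) * (b ℓ : ℝ) := by ring
  have hbℓ : (b ℓ : ℝ) = (n.choose ℓ : ℝ) * (ℓ : ℝ) ^ ℓ * ((n - ℓ : ℕ) : ℝ) ^ (n - ℓ) := by
    simp [hb]
  have hcast : (n:ℝ)^n = ∑ j ∈ Finset.range (n + 1), (b j : ℝ) := by
    rw [← Nat.cast_sum]; exact_mod_cast congrArg (Nat.cast : ℕ → ℝ) hsum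
  have hbnn : (0:ℝ) ≤ (b ℓ : ℝ) := Nat.cast_nonneg _
  have : (n:ℝ)^n ≤ 3 * ((ℓ:ℝ) + 1) * (b ℓ : ℝ) := by
    rw [hcast, hsplit]; nlinarith [hlow, hhigh, hbnn]
  calc (n:ℝ)^n ≤ 3 * ((ℓ:ℝ) + 1) * (b ℓ : ℝ) := this
    _ = 3 * ((ℓ : ℝ) + 1) * (n.choose ℓ : ℝ) * (ℓ : ℝ) ^ ℓ * ((n - ℓ : ℕ) : ℝ) ^ (n - ℓ) := by
        rw [hbℓ]; ring

-- Step 4: (n+2k)/n ≤ 3^(3k/(n+2k))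
lemma step4 (n k : ℕ) (hk : k ≤ n) (hn : 0 < n) :
    ((n : ℝ) + 2 * k) / n ≤ (3 : ℝ) ^ (3 * (k : ℝ) / ((n : ℝ) + 2 * k)) := by
  have hN : (0:ℝ) < n := by exact_mod_cast hn
  have hK : (0:ℝ) ≤ k := Nat.cast_nonneg k
  have hKN : (k:ℝ) ≤ n := by exact_mod_cast hk
  set u : ℝ := 2 * k / n with hu
  have hu0 : 0 ≤ u := by positivity
  have hu2 : u ≤ 2 := by rw [hu, div_le_iff₀ hN]; linarith
  -- convexity: (1+u) log (1+u) ≤ (3 log 3 / 2) * u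
  have hconv : (1 + u) * Real.log (1 + u) ≤ u / 2 * (3 * Real.log 3) := by
    have h := Real.convexOn_mul_log.2 (Set.mem_Ici.mpr (by norm_num : (0:ℝ) ≤ 1))
      (Set.mem_Ici.mpr (by norm_num : (0:ℝ) ≤ 3))
      (show (0:ℝ) ≤ 1 - u/2 by linarith) (show (0:ℝ) ≤ u/2 by linarith)
      (show (1 - u/2) + u/2 = 1 by ring)
    simp only [smul_eq_mul] at h
    have h1 : (1 - u/2) * 1 + u/2 * 3 = 1 + u := by ring
    rw [h1] at h
    calc (1 + u) * Real.log (1 + u)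
        ≤ (1 - u/2) * (1 * Real.log 1) + u/2 * (3 * Real.log 3) := h
      _ = u / 2 * (3 * Real.log 3) := by simp [Real.log_one]
  have h1u : (0:ℝ) < 1 + u := by linarith
  have hlam : 3 * (k : ℝ) / ((n : ℝ) + 2 * k) = (u / 2 * 3) / (1 + u) := by
    rw [hu]; field_simp
  have hlog : Real.log (1 + u) ≤ (u / 2 * 3) / (1 + u) * Real.log 3 := by
    rw [div_mul_eq_mul_div, le_div_iff₀ h1u]
    calc Real.log (1+u) * (1+u) = (1+u) * Real.log (1+u) := by ring
      _ ≤ u / 2 * (3 * Real.log 3) := hconv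
      _ = u / 2 * 3 * Real.log 3 := by ring
  have : 1 + u ≤ (3:ℝ) ^ ((u / 2 * 3) / (1 + u)) := by
    rw [Real.rpow_def_of_pos (by norm_num : (0:ℝ) < 3)]
    calc 1 + u = Real.exp (Real.log (1 + u)) := (Real.exp_log h1u).symm
      _ ≤ Real.exp ((u / 2 * 3) / (1 + u) * Real.log 3) := Real.exp_le_exp.mpr hlog
      _ = Real.exp (Real.log 3 * ((u / 2 * 3) / (1 + u))) := by ring_nf
  rw [hlam]
  calc ((n : ℝ) + 2 * k) / n = 1 + u := by rw [hu]; field_simp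
    _ ≤ _ := this

-- Step 2: AM-GM
lemma step2 (n k : ℕ) (hk : k ≤ n) (hn : 0 < n) (x : ℝ) (hx : 0 ≤ x) :
    (1 + 3 * x) ^ k * (1 + x) ^ (n - k) ≤ (1 + ((n : ℝ) + 2 * k) / n * x) ^ n := by
  have hN : (0:ℝ) < n := by exact_mod_cast hn
  have hp1 : (0:ℝ) ≤ 1 + 3 * x := by linarith
  have hp2 : (0:ℝ) ≤ 1 + x := by linarith
  set w1 : ℝ := (k : ℝ) / n with hw1
  set w2 : ℝ := ((n - k : ℕ) : ℝ) / n with hw2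
  have hnk : ((n - k : ℕ) : ℝ) = (n : ℝ) - k := by
    rw [Nat.cast_sub hk]
  have hw : w1 + w2 = 1 := by rw [hw1, hw2, hnk]; field_simp; ring
  have key : (1 + 3*x) ^ w1 * (1 + x) ^ w2 ≤ 1 + ((n : ℝ) + 2 * k) / n * x := by
    calc (1 + 3*x) ^ w1 * (1 + x) ^ w2 ≤ w1 * (1 + 3*x) + w2 * (1 + x) :=
          Real.geom_mean_le_arith_mean2_weighted (by positivity) (by positivity) hp1 hp2 hw
      _ = 1 + ((n : ℝ) + 2 * k) / n * x := by
          rw [hw1, hw2, hnk]; field_simp; ring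
  have hbase : (0:ℝ) ≤ (1 + 3*x) ^ w1 * (1 + x) ^ w2 := by positivity
  have := pow_le_pow_left₀ hbase key n
  calc (1 + 3 * x) ^ k * (1 + x) ^ (n - k)
      = ((1 + 3*x) ^ w1 * (1 + x) ^ w2) ^ n := by
        rw [mul_pow, ← Real.rpow_natCast ((1 + 3*x) ^ w1) n, ← Real.rpow_natCast ((1 + x) ^ w2) n,
          ← Real.rpow_mul hp1, ← Real.rpow_mul hp2, hw1, hw2]
        rw [div_mul_cancel₀ _ (ne_of_gt hN), div_mul_cancel₀ _ (ne_of_gt hN)]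
        rw [Real.rpow_natCast, Real.rpow_natCast]
    _ ≤ (1 + ((n : ℝ) + 2 * k) / n * x) ^ n := this

lemma expand_le (m ℓ : ℕ) (c : ℝ) (hc : 0 ≤ c) :
    ∑ p ∈ Finset.range (ℓ + 1), (m.choose p : ℝ) * c ^ p ≤ (1 + c) ^ m := by
  have hfull : (1 + c) ^ m = ∑ p ∈ Finset.range (m + 1), (m.choose p : ℝ) * c ^ p := by
    rw [add_comm]
    rw [add_pow]
    exact Finset.sum_congr rfl fun p _ => by rw [one_pow]; ring
  have h1 : ∑ p ∈ Finset.range (ℓ + 1), (m.choose p : ℝ) * c ^ p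
      ≤ ∑ p ∈ Finset.range (ℓ + m + 1), (m.choose p : ℝ) * c ^ p := by
    apply Finset.sum_le_sum_of_subset_of_nonneg
    · exact Finset.range_subset_range.mpr (by omega)
    · intro p _ _; positivity
  have h2 : ∑ p ∈ Finset.range (ℓ + m + 1), (m.choose p : ℝ) * c ^ p
      = ∑ p ∈ Finset.range (m + 1), (m.choose p : ℝ) * c ^ p := by
    symm
    apply Finset.sum_subset (Finset.range_subset_range.mpr (by omega))
    intro p _ hp
    simp only [Finset.mem_range, not_lt] at hp
    rw [Nat.choose_eq_zero_of_lt (by omega)]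
    simp
  rw [hfull]
  rw [← h2]
  exact h1

lemma step1 (n k ℓ : ℕ) (x : ℝ) (hx : 0 ≤ x) :
    (∑ p ∈ Finset.range (ℓ + 1),
        (k.choose p : ℝ) * 3 ^ p * ((n - k).choose (ℓ - p) : ℝ)) * x ^ ℓ
      ≤ (1 + 3 * x) ^ k * (1 + x) ^ (n - k) := by
  have hinner : ∀ p ∈ Finset.range (ℓ + 1),
      (k.choose p : ℝ) * 3 ^ p * ((n - k).choose (ℓ - p) : ℝ) * x ^ ℓ
        ≤ ((k.choose p : ℝ) * (3 * x) ^ p) *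
          ∑ q ∈ Finset.range (ℓ + 1), ((n - k).choose q : ℝ) * x ^ q := by
    intro p hp
    have hpℓ : p ≤ ℓ := by simpa [Nat.lt_succ_iff] using Finset.mem_range.mp hp
    have hxsplit : x ^ ℓ = x ^ p * x ^ (ℓ - p) := by
      rw [← pow_add]; congr 1; omega
    have hterm : ((n - k).choose (ℓ - p) : ℝ) * x ^ (ℓ - p)
        ≤ ∑ q ∈ Finset.range (ℓ + 1), ((n - k).choose q : ℝ) * x ^ q := by
      apply Finset.single_le_sum (f := fun q => ((n - k).choose q : ℝ) * x ^ q)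
      · intro q _; positivity
      · exact Finset.mem_range.mpr (by omega)
    calc (k.choose p : ℝ) * 3 ^ p * ((n - k).choose (ℓ - p) : ℝ) * x ^ ℓ
        = ((k.choose p : ℝ) * (3 * x) ^ p) * (((n - k).choose (ℓ - p) : ℝ) * x ^ (ℓ - p)) := by
          rw [hxsplit, mul_pow]; ring
      _ ≤ ((k.choose p : ℝ) * (3 * x) ^ p) *
          ∑ q ∈ Finset.range (ℓ + 1), ((n - k).choose q : ℝ) * x ^ q := by
          apply mul_le_mul_of_nonneg_left hterm (by positivity)
  calc (∑ p ∈ Finset.range (ℓ + 1),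
        (k.choose p : ℝ) * 3 ^ p * ((n - k).choose (ℓ - p) : ℝ)) * x ^ ℓ
      = ∑ p ∈ Finset.range (ℓ + 1),
        (k.choose p : ℝ) * 3 ^ p * ((n - k).choose (ℓ - p) : ℝ) * x ^ ℓ := by
        rw [Finset.sum_mul]
    _ ≤ ∑ p ∈ Finset.range (ℓ + 1), ((k.choose p : ℝ) * (3 * x) ^ p) *
          ∑ q ∈ Finset.range (ℓ + 1), ((n - k).choose q : ℝ) * x ^ q :=
        Finset.sum_le_sum hinner
    _ = (∑ p ∈ Finset.range (ℓ + 1), (k.choose p : ℝ) * (3 * x) ^ p) *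
          ∑ q ∈ Finset.range (ℓ + 1), ((n - k).choose q : ℝ) * x ^ q := by
        rw [← Finset.sum_mul]
    _ ≤ (1 + 3 * x) ^ k * (1 + x) ^ (n - k) := by
        apply mul_le_mul (expand_le k ℓ (3 * x) (by positivity))
          (expand_le (n - k) ℓ x hx)
          (Finset.sum_nonneg fun q _ => by positivity) (by positivity)

/-- For `ℓ ≤ n`, `k ≤ n` and `n + 2k > 0`, with `λ = 3k/(n+2k)`,
`∑_{p=0}^{ℓ} C(k,p) 3^p C(n-k, ℓ-p) ≤ (ℓ+1) · 3^{λℓ+1} · C(n,ℓ)`. -/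
theorem sum_binom_three_pow_le (n k ℓ : ℕ) (hℓ : ℓ ≤ n) (hk : k ≤ n)
    (hpos : 0 < n + 2 * k) :
    (∑ p ∈ Finset.range (ℓ + 1),
        (k.choose p : ℝ) * 3 ^ p * ((n - k).choose (ℓ - p) : ℝ)) ≤
      ((ℓ : ℝ) + 1) *
        (3 : ℝ) ^ ((3 * (k : ℝ) / ((n : ℝ) + 2 * k)) * (ℓ : ℝ) + 1) *
        (n.choose ℓ : ℝ) := by
  have hn : 0 < n := by omega
  have hN : (0:ℝ) < n := by exact_mod_cast hn
  have hc : (0:ℝ) < (n : ℝ) + 2 * k := by positivity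
  set lam : ℝ := 3 * (k : ℝ) / ((n : ℝ) + 2 * k) with hlam
  -- case ℓ = 0
  rcases Nat.eq_zero_or_pos ℓ with h0 | hℓ1
  · subst h0
    simp only [Nat.cast_zero, zero_add, Nat.choose_zero_right, Nat.sub_zero,
      Finset.range_one, Finset.sum_singleton, pow_zero, Nat.cast_one, mul_zero]
    rw [Real.rpow_one]
    norm_num
  -- case ℓ = n
  rcases eq_or_lt_of_le hℓ with hn' | hln
  · subst hn'
    have hsum : (∑ p ∈ Finset.range (ℓ + 1),
        (k.choose p : ℝ) * 3 ^ p * ((ℓ - k).choose (ℓ - p) : ℝ)) = 3 ^ k := by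
      rw [Finset.sum_eq_single_of_mem k (Finset.mem_range.mpr (by omega))]
      · simp
      · intro p hp hpk
        rcases lt_or_gt_of_ne hpk with h | h
        · rw [Nat.choose_eq_zero_of_lt (show ℓ - k < ℓ - p by omega)]; ring
        · rw [Nat.choose_eq_zero_of_lt h]; simp
    rw [hsum, Nat.choose_self, Nat.cast_one, mul_one]
    have hexp : (k : ℝ) ≤ lam * ℓ + 1 := by
      have hkr : (k:ℝ) ≤ ℓ := by exact_mod_cast hk
      have hk0 : (0:ℝ) ≤ k := Nat.cast_nonneg k
      have h2 : (k:ℝ) ≤ 3 * k * ℓ / ((ℓ:ℝ) + 2 * k) := by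
        rw [le_div_iff₀ hc]; nlinarith
      have h3 : lam * ℓ = 3 * k * ℓ / ((ℓ:ℝ) + 2 * k) := by
        rw [hlam]; ring
      linarith [h3 ▸ h2]
    calc (3:ℝ) ^ k = (3:ℝ) ^ ((k:ℕ):ℝ) := by rw [Real.rpow_natCast]
      _ ≤ (3:ℝ) ^ (lam * ℓ + 1) :=
          Real.rpow_le_rpow_of_exponent_le (by norm_num) hexp
      _ ≤ ((ℓ : ℝ) + 1) * (3:ℝ) ^ (lam * ℓ + 1) := by
          nlinarith [Real.rpow_pos_of_pos (show (0:ℝ) < 3 by norm_num) (lam * ℓ + 1),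
            Nat.cast_nonneg (α := ℝ) ℓ]
  -- main case 1 ≤ ℓ < n
  set N : ℝ := (n : ℝ) with hNdef
  set L : ℝ := (ℓ : ℝ) with hLdef
  set c : ℝ := N + 2 * k with hcdef
  have hL1 : (1:ℝ) ≤ L := by simp only [hLdef]; exact_mod_cast hℓ1
  have hNL : (0:ℝ) < N - L := by
    have : (ℓ:ℝ) < n := by exact_mod_cast hln
    simp only [hNdef, hLdef]; linarith
  set x : ℝ := N * L / (c * (N - L)) with hxdef
  have hx : 0 < x := by
    apply div_pos (by nlinarith) (by nlinarith)
  have hcx : c / N * x = L / (N - L) := by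
    rw [hxdef]; field_simp
  have heq : 1 + c / N * x = N / (N - L) := by
    rw [hcx]; field_simp; ring
  set C : ℝ := (n.choose ℓ : ℝ) with hCdef
  have hCpos : 0 < C := by
    simp only [hCdef]; exact_mod_cast Nat.choose_pos hℓ
  -- chain steps 1 and 2
  have h12 : (∑ p ∈ Finset.range (ℓ + 1),
        (k.choose p : ℝ) * 3 ^ p * ((n - k).choose (ℓ - p) : ℝ)) * x ^ ℓ
      ≤ (N / (N - L)) ^ n := by
    calc (∑ p ∈ Finset.range (ℓ + 1),
        (k.choose p : ℝ) * 3 ^ p * ((n - k).choose (ℓ - p) : ℝ)) * x ^ ℓ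
        ≤ (1 + 3 * x) ^ k * (1 + x) ^ (n - k) := step1 n k ℓ x (le_of_lt hx)
      _ ≤ (1 + ((n : ℝ) + 2 * k) / n * x) ^ n := step2 n k hk hn x (le_of_lt hx)
      _ = (N / (N - L)) ^ n := by rw [← heq]
  -- step 5 reformulated
  have hcast : ((n - ℓ : ℕ) : ℝ) = N - L := by
    simp only [hNdef, hLdef]; exact Nat.cast_sub (le_of_lt hln)
  have h5 : N ^ n ≤ 3 * (L + 1) * C * L ^ ℓ * (N - L) ^ (n - ℓ) := by
    have := step5 n ℓ hℓ1 hln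
    rw [hcast] at this
    exact this
  have hkey : N ^ n * (N - L) ^ ℓ ≤ 3 * (L + 1) * C * L ^ ℓ * (N - L) ^ n := by
    calc N ^ n * (N - L) ^ ℓ
        ≤ (3 * (L + 1) * C * L ^ ℓ * (N - L) ^ (n - ℓ)) * (N - L) ^ ℓ :=
          mul_le_mul_of_nonneg_right h5 (by positivity)
      _ = 3 * (L + 1) * C * L ^ ℓ * ((N - L) ^ (n - ℓ) * (N - L) ^ ℓ) := by ring
      _ = 3 * (L + 1) * C * L ^ ℓ * (N - L) ^ n := by
          rw [← pow_add, Nat.sub_add_cancel (le_of_lt hln)]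
  have h5' : (N / (N - L)) ^ n ≤ 3 * (L + 1) * C * (L / (N - L)) ^ ℓ := by
    rw [div_pow, div_pow, ← mul_div_assoc, div_le_div_iff₀ (by positivity) (by positivity)]
    linarith [hkey]
  -- conclude S ≤ T
  set T : ℝ := 3 * (L + 1) * C * (c / N) ^ ℓ with hTdef
  have hTx : T * x ^ ℓ = 3 * (L + 1) * C * (L / (N - L)) ^ ℓ := by
    rw [hTdef, mul_assoc, ← mul_pow, hcx]
  have hST : (∑ p ∈ Finset.range (ℓ + 1),
      (k.choose p : ℝ) * 3 ^ p * ((n - k).choose (ℓ - p) : ℝ)) ≤ T := by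
    apply le_of_mul_le_mul_right _ (pow_pos hx ℓ)
    calc (∑ p ∈ Finset.range (ℓ + 1),
        (k.choose p : ℝ) * 3 ^ p * ((n - k).choose (ℓ - p) : ℝ)) * x ^ ℓ
        ≤ (N / (N - L)) ^ n := h12
      _ ≤ 3 * (L + 1) * C * (L / (N - L)) ^ ℓ := h5'
      _ = T * x ^ ℓ := hTx.symm
  -- final comparison with the rpow
  have hrpow : (3:ℝ) ^ (lam * L + 1) = ((3:ℝ) ^ lam) ^ ℓ * 3 := by
    rw [Real.rpow_add (by norm_num), Real.rpow_one]
    congr 1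
    rw [← Real.rpow_natCast ((3:ℝ) ^ lam) ℓ, ← Real.rpow_mul (by norm_num)]
  have h4 : c / N ≤ (3:ℝ) ^ lam := step4 n k hk hn
  calc (∑ p ∈ Finset.range (ℓ + 1),
      (k.choose p : ℝ) * 3 ^ p * ((n - k).choose (ℓ - p) : ℝ))
      ≤ T := hST
    _ ≤ 3 * (L + 1) * C * ((3:ℝ) ^ lam) ^ ℓ := by
        rw [hTdef]
        apply mul_le_mul_of_nonneg_left (pow_le_pow_left₀ (by positivity) h4 ℓ) (by positivity)
    _ = (L + 1) * (((3:ℝ) ^ lam) ^ ℓ * 3) * C := by ring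
    _ = (L + 1) * (3:ℝ) ^ (lam * L + 1) * C := by rw [hrpow]
end

section
/- The distribution π(m) = C(n,m) · 3^m / (4^n - 1) on {1,...,n} is a stationary distribution of the Markov chain with transition matrix P given by P(ℓ,ℓ-1) = 2ℓ(ℓ-1)/(5n(n-1)), P(ℓ,ℓ+1) = 6ℓ(n-ℓ)/(5n(n-1)), P(ℓ,ℓ) = 1 - 2ℓ(3n-2ℓ-1)/(5n(n-1)), and 0 otherwise; that is, ∑_{ℓ=1}^n π(ℓ) P(ℓ,m) = π(m) for all 1 ≤ m ≤ n. -/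
open Finset

/-- The transition matrix of the weight Markov chain of the random circuit. -/
noncomputable def weightP (n ℓ m : ℕ) : ℝ :=
  if m = ℓ then 1 - 2 * ℓ * (3 * n - 2 * ℓ - 1) / (5 * n * (n - 1))
  else if m + 1 = ℓ then 2 * ℓ * (ℓ - 1) / (5 * n * (n - 1))
  else if m = ℓ + 1 then 6 * ℓ * (n - ℓ) / (5 * n * (n - 1))
  else 0

/-- The stationary distribution `π(m) = C(n,m) 3^m / (4^n - 1)`. -/
noncomputable def weightPi (n m : ℕ) : ℝ := (n.choose m : ℝ) * 3 ^ m / (4 ^ n - 1)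

/-- `π` is a stationary distribution of the Markov chain `P`:
`∑_{ℓ=1}^n π(ℓ) P(ℓ,m) = π(m)` for all `1 ≤ m ≤ n`. -/
theorem weightPi_stationary (n : ℕ) (hn : 2 ≤ n) :
    ∀ m ∈ Finset.Icc 1 n,
      ∑ ℓ ∈ Finset.Icc 1 n, weightPi n ℓ * weightP n ℓ m = weightPi n m := by
  intro m hm
  simp only [Finset.mem_Icc] at hm
  obtain ⟨hm1, hm2⟩ := hm
  obtain ⟨k, rfl⟩ : ∃ k, m = k + 1 := ⟨m - 1, (Nat.succ_pred_eq_of_pos hm1).symm⟩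
  set f : ℕ → ℝ := fun ℓ => weightPi n ℓ * weightP n ℓ (k + 1) with hf
  have hkn : k + 1 ≤ n := hm2
  -- extend the sum to Icc 0 (n+1)
  have hzero : ∀ x ∈ Finset.Icc 0 (n + 1), x ∉ Finset.Icc 1 n → f x = 0 := by
    intro x hx hx'
    simp only [Finset.mem_Icc] at hx hx'
    rcases Nat.eq_zero_or_pos x with rfl | hx0
    · simp [hf, weightP, weightPi]
    · have hxn : x = n + 1 := le_antisymm hx.2 (by omega)
      subst hxn
      simp [hf, weightPi, Nat.choose_succ_self]
  have hext : ∑ ℓ ∈ Finset.Icc 1 n, f ℓ = ∑ ℓ ∈ Finset.Icc 0 (n + 1), f ℓ := by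
    exact (Finset.sum_subset (Finset.Icc_subset_Icc (Nat.zero_le _) (Nat.le_succ _)) hzero)
  -- restrict to the three relevant terms
  have htri : ∑ ℓ ∈ Finset.Icc 0 (n + 1), f ℓ = f k + f (k + 1) + f (k + 2) := by
    have hsub : ({k, k + 1, k + 2} : Finset ℕ) ⊆ Finset.Icc 0 (n + 1) := by
      intro x hx
      simp only [Finset.mem_insert, Finset.mem_singleton] at hx
      simp only [Finset.mem_Icc]
      rcases hx with rfl | rfl | rfl <;> omega
    have hz : ∀ x ∈ Finset.Icc 0 (n + 1), x ∉ ({k, k + 1, k + 2} : Finset ℕ) → f x = 0 := by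
      intro x _ hx
      simp only [Finset.mem_insert, Finset.mem_singleton] at hx
      push_neg at hx
      have hP : weightP n x (k + 1) = 0 := by
        unfold weightP
        rw [if_neg (by omega), if_neg (by omega), if_neg (by omega)]
      simp [hf, hP]
    rw [← Finset.sum_subset hsub hz]
    rw [Finset.sum_insert (by simp only [Finset.mem_insert, Finset.mem_singleton]; omega),
      Finset.sum_insert (by simp only [Finset.mem_singleton]; omega),
      Finset.sum_singleton]
    ring
  rw [hext, htri]
  -- compute the three transition probabilities
  have hP1 : weightP n k (k + 1) = 6 * k * ((n : ℝ) - k) / (5 * n * ((n : ℝ) - 1)) := by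
    unfold weightP
    rw [if_neg (by omega), if_neg (by omega), if_pos rfl]
  have hP2 : weightP n (k + 1) (k + 1)
      = 1 - 2 * ((k : ℝ) + 1) * (3 * n - 2 * ((k : ℝ) + 1) - 1) / (5 * n * ((n : ℝ) - 1)) := by
    unfold weightP
    rw [if_pos rfl]
    push_cast
    ring
  have hP3 : weightP n (k + 2) (k + 1)
      = 2 * ((k : ℝ) + 2) * (((k : ℝ) + 2) - 1) / (5 * n * ((n : ℝ) - 1)) := by
    unfold weightP
    rw [if_neg (by omega), if_pos rfl]
    push_cast
    ring
  simp only [hf]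
  rw [hP1, hP2, hP3]
  simp only [weightPi]
  -- binomial identities
  have hkn' : k ≤ n := by omega
  have h1 : (n.choose (k + 1) : ℝ) * (k + 1) = n.choose k * ((n : ℝ) - k) := by
    have := Nat.choose_succ_right_eq n k
    have hcast : ((n - k : ℕ) : ℝ) = (n : ℝ) - k := by
      push_cast [Nat.cast_sub hkn']; ring
    calc (n.choose (k + 1) : ℝ) * (k + 1) = ((n.choose (k + 1) * (k + 1) : ℕ) : ℝ) := by
          push_cast; ring
      _ = ((n.choose k * (n - k) : ℕ) : ℝ) := by rw [this]
      _ = n.choose k * ((n : ℝ) - k) := by push_cast [Nat.cast_sub hkn']; ring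
  have h2 : (n.choose (k + 2) : ℝ) * (k + 2) = n.choose (k + 1) * ((n : ℝ) - (k + 1)) := by
    have := Nat.choose_succ_right_eq n (k + 1)
    calc (n.choose (k + 2) : ℝ) * (k + 2) = ((n.choose (k + 2) * (k + 2) : ℕ) : ℝ) := by
          push_cast; ring
      _ = ((n.choose (k + 1) * (n - (k + 1)) : ℕ) : ℝ) := by rw [this]
      _ = n.choose (k + 1) * ((n : ℝ) - (k + 1)) := by push_cast [Nat.cast_sub hkn]; ring
  -- nonvanishing denominators
  have hD : (4 : ℝ) ^ n - 1 ≠ 0 := by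
    have : (1 : ℝ) < 4 ^ n := by
      calc (1 : ℝ) = 1 ^ n := (one_pow n).symm
      _ < 4 ^ n := by
        apply pow_lt_pow_left₀ <;> norm_num
        omega
    linarith
  have hn1 : (1 : ℝ) ≤ (n : ℝ) := by exact_mod_cast Nat.one_le_of_lt hn
  have hE : (5 : ℝ) * n * ((n : ℝ) - 1) ≠ 0 := by
    have h2n : (2 : ℝ) ≤ (n : ℝ) := by exact_mod_cast hn
    have : (0 : ℝ) < 5 * n * ((n : ℝ) - 1) := by nlinarith
    linarith
  have hkey : (n.choose k : ℝ) * 3 ^ k * (6 * k * ((n : ℝ) - k))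
      + (n.choose (k + 1) : ℝ) * 3 ^ (k + 1)
          * (5 * n * ((n : ℝ) - 1) - 2 * ((k : ℝ) + 1) * (3 * n - 2 * ((k : ℝ) + 1) - 1))
      + (n.choose (k + 2) : ℝ) * 3 ^ (k + 2) * (2 * ((k : ℝ) + 2) * ((k : ℝ) + 1))
      = (n.choose (k + 1) : ℝ) * 3 ^ (k + 1) * (5 * n * ((n : ℝ) - 1)) := by
    linear_combination (-(6 * (k : ℝ) * 3 ^ k)) * h1 + (2 * 3 ^ (k + 2) * ((k : ℝ) + 1)) * h2
  have hn0 : (n : ℝ) ≠ 0 := by positivity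
  have hn1' : (n : ℝ) - 1 ≠ 0 := by
    have h2n : (2 : ℝ) ≤ (n : ℝ) := by exact_mod_cast hn
    linarith
  field_simp
  linear_combination hkey
end

section
/- Let U ∈ C_n (the n-qubit Clifford group) and suppose for all ν_A ∈ {0,1,2,3}^k \ {0}, ν_B ∈ {0,3}^{n-k}, and all μ with 1 ≤ w(μ) ≤ d, tr[σ_μ U (σ_{ν_A} ⊗ σ_{ν_B}) U†] = 0. Then the code with basis |x̄⟩ = U(|x⟩ ⊗ |0⟩^{⊗n-k}) satisfies ⟨x̄| σ_μ |ȳ⟩ = C_μ δ_{xy} for all x, y ∈ {0,1}^k and all μ with 1 ≤ w(μ) ≤ d, where C_μ = 2^{-k} tr[σ_μ U (I ⊗ |0⟩⟨0|^{⊗n-k}) U†]. -/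
open Matrix BigOperators Finset

/-- The four `2×2` Pauli matrices: `I, X, Y, Z`. -/
noncomputable def pauli : Fin 4 → Matrix (Fin 2) (Fin 2) ℂ
  | 0 => !![1, 0; 0, 1]
  | 1 => !![0, 1; 1, 0]
  | 2 => !![0, -Complex.I; Complex.I, 0]
  | 3 => !![1, 0; 0, -1]

/-- The Pauli operator `σ_ν = σ_{ν_1} ⊗ ⋯ ⊗ σ_{ν_n}` on the qubits indexed by `ι`. -/
noncomputable def pauliString {ι : Type*} [Fintype ι] (ν : ι → Fin 4) :
    Matrix (ι → Fin 2) (ι → Fin 2) ℂ :=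
  fun x y => ∏ i, pauli (ν i) (x i) (y i)

/-- The weight of a Pauli string: the number of nonidentity tensor factors. -/
def pWeight {ι : Type*} [Fintype ι] [DecidableEq ι] (ν : ι → Fin 4) : ℕ :=
  (Finset.univ.filter fun i => ν i ≠ 0).card

variable {k m : ℕ}

/-- The vector `|x⟩_A ⊗ |0⟩_B` on the `k + m` qubits `Fin k ⊕ Fin m`. -/
noncomputable def ketX0 (x : Fin k → Fin 2) : (Fin k ⊕ Fin m → Fin 2) → ℂ :=
  fun z => if (∀ i, z (Sum.inl i) = x i) ∧ (∀ j : Fin m, z (Sum.inr j) = 0) then 1 else 0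

/-- The code state `|x̄⟩ = U (|x⟩ ⊗ |0⟩^{⊗ m})`. -/
noncomputable def codeState (U : Matrix (Fin k ⊕ Fin m → Fin 2) (Fin k ⊕ Fin m → Fin 2) ℂ)
    (x : Fin k → Fin 2) : (Fin k ⊕ Fin m → Fin 2) → ℂ :=
  U.mulVec (ketX0 x)

/-- The operator `I_A ⊗ |0⟩⟨0|_B^{⊗ m}`. -/
noncomputable def idProjZero :
    Matrix (Fin k ⊕ Fin m → Fin 2) (Fin k ⊕ Fin m → Fin 2) ℂ :=
  fun z w => if (∀ i, z (Sum.inl i) = w (Sum.inl i)) ∧ (∀ j : Fin m, z (Sum.inr j) = 0) ∧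
      (∀ j : Fin m, w (Sum.inr j) = 0) then 1 else 0
section helpers

lemma pauli_complete (p q r s : Fin 2) :
    ∑ a : Fin 4, pauli a p q * pauli a r s = if p = s ∧ q = r then 2 else 0 := by
  fin_cases p <;> fin_cases q <;> fin_cases r <;> fin_cases s <;>
    simp [pauli, Fin.sum_univ_four, Complex.I_mul_I] <;> norm_num

lemma pauli_zero_apply (p q : Fin 2) : pauli 0 p q = if p = q then 1 else 0 := by
  fin_cases p <;> fin_cases q <;> simp [pauli]

lemma pauli_bad (a : Fin 4) (h0 : a ≠ 0) (h3 : a ≠ 3) : pauli a 0 0 = 0 := by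
  fin_cases a <;> simp_all [pauli]

lemma pauliString_complete {ι : Type*} [Fintype ι] [DecidableEq ι] (X Y z w : ι → Fin 2) :
    ∑ ν : ι → Fin 4, pauliString ν X Y * pauliString ν z w
      = if X = w ∧ Y = z then (2:ℂ) ^ Fintype.card ι else 0 := by
  have h1 : ∀ ν : ι → Fin 4, pauliString ν X Y * pauliString ν z w
      = ∏ i, (pauli (ν i) (X i) (Y i) * pauli (ν i) (z i) (w i)) := fun ν => by
    rw [pauliString, pauliString, ← Finset.prod_mul_distrib]
  simp only [h1]
  rw [(Fintype.prod_sum (f := fun (i : ι) (a : Fin 4) =>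
    pauli a (X i) (Y i) * pauli a (z i) (w i))).symm]
  simp only [pauli_complete]
  by_cases h : X = w ∧ Y = z
  · rw [if_pos h]
    obtain ⟨hx, hy⟩ := h
    subst hx; subst hy
    simp [Finset.prod_const, Finset.card_univ]
  · rw [if_neg h]
    rw [not_and_or] at h
    have : ∃ i, ¬ (X i = w i ∧ Y i = z i) := by
      rcases h with h | h
      · obtain ⟨i, hi⟩ := Function.ne_iff.mp h; exact ⟨i, fun hc => hi hc.1⟩
      · obtain ⟨i, hi⟩ := Function.ne_iff.mp h; exact ⟨i, fun hc => hi hc.2⟩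
    obtain ⟨i, hi⟩ := this
    exact Finset.prod_eq_zero (Finset.mem_univ i) (if_neg hi)

lemma prod_ite_eq_forall {ι : Type*} [Fintype ι] [DecidableEq ι] (f g : ι → Fin 2) :
    (∏ i, if f i = g i then (1:ℂ) else 0) = if f = g then 1 else 0 := by
  by_cases h : f = g
  · rw [if_pos h]; subst h; simp
  · rw [if_neg h]; obtain ⟨i, hi⟩ := Function.ne_iff.mp h
    exact Finset.prod_eq_zero (Finset.mem_univ i) (if_neg hi)

variable {k m : ℕ}

lemma ketX0_eq (a : Fin k → Fin 2) (z : Fin k ⊕ Fin m → Fin 2) :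
    ketX0 a z = if z = Sum.elim a 0 then 1 else 0 := by
  have : ((∀ i, z (Sum.inl i) = a i) ∧ ∀ j : Fin m, z (Sum.inr j) = 0) ↔ z = Sum.elim a 0 := by
    rw [funext_iff, Sum.forall]; simp
  rw [ketX0, if_congr this rfl rfl]

lemma star_ketX0 (a : Fin k → Fin 2) : star (ketX0 (m := m) a) = ketX0 a := by
  funext z; simp only [Pi.star_apply, ketX0]; split_ifs <;> simp

lemma traceA' (U : Matrix (Fin k ⊕ Fin m → Fin 2) (Fin k ⊕ Fin m → Fin 2) ℂ)
    (P : Matrix (Fin k ⊕ Fin m → Fin 2) (Fin k ⊕ Fin m → Fin 2) ℂ)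
    (a b : Fin k → Fin 2) :
    star (U.mulVec (ketX0 a)) ⬝ᵥ P.mulVec (U.mulVec (ketX0 b)) =
      (P * (U * Matrix.vecMulVec (ketX0 b) (ketX0 a) * star U)).trace := by
  rw [Matrix.star_eq_conjTranspose]
  have h1 : U * Matrix.vecMulVec (ketX0 b) (ketX0 a) * Uᴴ
      = Matrix.replicateCol Unit (U *ᵥ ketX0 b) * Matrix.replicateRow Unit (star (U *ᵥ ketX0 a)) := by
    rw [Matrix.vecMulVec_eq Unit, Matrix.star_mulVec, star_ketX0]
    rw [Matrix.mul_assoc, Matrix.mul_assoc, ← Matrix.replicateRow_vecMul, ← Matrix.mul_assoc,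
      ← Matrix.replicateCol_mulVec]
  rw [h1, ← Matrix.mul_assoc, Matrix.trace_mul_comm, ← Matrix.mul_assoc, ← Matrix.replicateRow_vecMul]
  have h2 : ∀ (u v : (Fin k ⊕ Fin m → Fin 2) → ℂ),
      (Matrix.replicateRow Unit v * Matrix.replicateCol Unit u).trace = v ⬝ᵥ u := by
    intro u v; simp [Matrix.trace]
  rw [h2, Matrix.dotProduct_mulVec]

lemma idP' : (idProjZero : Matrix (Fin k ⊕ Fin m → Fin 2) (Fin k ⊕ Fin m → Fin 2) ℂ)
    = ∑ x' : Fin k → Fin 2, Matrix.vecMulVec (ketX0 x') (ketX0 x') := by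
  ext z w
  simp only [Matrix.sum_apply, Matrix.vecMulVec_apply, ketX0_eq, idProjZero]
  rw [Finset.sum_eq_single (fun i => z (Sum.inl i))]
  · by_cases h1 : (∀ i, z (Sum.inl i) = w (Sum.inl i)) ∧ (∀ j : Fin m, z (Sum.inr j) = 0) ∧
        (∀ j : Fin m, w (Sum.inr j) = 0)
    · rw [if_pos h1, if_pos, if_pos, mul_one]
      · funext s; cases s with
        | inl i => simp [← h1.1 i]
        | inr j => simp [h1.2.2 j]
      · funext s; cases s with
        | inl i => simp
        | inr j => simp [h1.2.1 j]
    · rw [if_neg h1]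
      rcases eq_or_ne z (Sum.elim (fun i => z (Sum.inl i)) 0) with h2 | h2
      · rcases eq_or_ne w (Sum.elim (fun i => z (Sum.inl i)) 0) with h3 | h3
        · exfalso; apply h1
          exact ⟨fun i => by rw [h2, h3], fun j => by rw [h2]; simp, fun j => by rw [h3]; simp⟩
        · rw [if_neg h3, mul_zero]
      · rw [if_neg h2, zero_mul]
  · intro x' _ hx'
    rw [if_neg, zero_mul]
    intro hz; apply hx'; funext i; rw [hz]; simp
  · simp

lemma expandM (a b : Fin k → Fin 2) :
    (2:ℂ)^(k+m) • Matrix.vecMulVec (ketX0 b) (ketX0 a)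
      = ∑ ν : Fin k ⊕ Fin m → Fin 4,
          pauliString ν (Sum.elim a 0) (Sum.elim b 0) • pauliString ν := by
  ext z w
  simp only [Matrix.smul_apply, Matrix.sum_apply, Matrix.vecMulVec_apply, smul_eq_mul]
  rw [pauliString_complete]
  have hcard : Fintype.card (Fin k ⊕ Fin m) = k + m := by simp
  rw [hcard, ketX0_eq, ketX0_eq]
  by_cases h : Sum.elim a 0 = w ∧ Sum.elim b 0 = z
  · rw [if_pos h, if_pos h.2.symm, if_pos h.1.symm]; ring
  · rw [if_neg h]
    by_cases h2 : z = Sum.elim b 0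
    · have h3 : ¬ w = Sum.elim a 0 := fun hc => h ⟨hc.symm, h2.symm⟩
      rw [if_neg h3, mul_zero, mul_zero]
    · rw [if_neg h2, zero_mul, mul_zero]

end helpers
/-- If a Clifford unitary `U` satisfies
`tr[σ_μ U (σ_{ν_A} ⊗ σ_{ν_B}) U†] = 0` for all nonzero `ν_A ∈ {0,1,2,3}^k`, all
`ν_B ∈ {0,3}^m` and all `μ` with `1 ≤ w(μ) ≤ d`, then the code states
`|x̄⟩ = U(|x⟩ ⊗ |0⟩^{⊗m})` satisfy `⟨x̄|σ_μ|ȳ⟩ = C_μ δ_{xy}` with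
`C_μ = 2^{-k} tr[σ_μ U (I ⊗ |0⟩⟨0|^{⊗m}) U†]`. -/
theorem distance_condition_sufficient (k m d : ℕ)
    (U : Matrix (Fin k ⊕ Fin m → Fin 2) (Fin k ⊕ Fin m → Fin 2) ℂ)
    (hU : U ∈ Matrix.unitaryGroup (Fin k ⊕ Fin m → Fin 2) ℂ)
    (hClif : ∀ ν : Fin k ⊕ Fin m → Fin 4, ∃ (μ : Fin k ⊕ Fin m → Fin 4) (ε : ℂ),
      (ε = 1 ∨ ε = -1) ∧ U * pauliString ν * star U = ε • pauliString μ)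
    (hcond : ∀ (νA : Fin k → Fin 4) (νB : Fin m → Fin 4), νA ≠ 0 →
      (∀ j, νB j = 0 ∨ νB j = 3) →
      ∀ μ : Fin k ⊕ Fin m → Fin 4, 1 ≤ pWeight μ → pWeight μ ≤ d →
        (pauliString μ * (U * pauliString (Sum.elim νA νB) * star U)).trace = 0) :
    ∀ (x y : Fin k → Fin 2) (μ : Fin k ⊕ Fin m → Fin 4),
      1 ≤ pWeight μ → pWeight μ ≤ d →
      star (codeState U x) ⬝ᵥ (pauliString μ).mulVec (codeState U y) =
        if x = y then
          (2 : ℂ) ^ (-(k : ℤ)) * (pauliString μ * (U * idProjZero * star U)).trace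
        else 0 := by
  intro x y μ hw1 hw2
  classical
  -- trace expansion of matrix elements
  have expandT : ∀ a b : Fin k → Fin 2,
      (2:ℂ)^(k+m) * (star (codeState U a) ⬝ᵥ (pauliString μ).mulVec (codeState U b))
        = ∑ ν : Fin k ⊕ Fin m → Fin 4,
            pauliString ν (Sum.elim a 0) (Sum.elim b 0)
              * (pauliString μ * (U * pauliString ν * star U)).trace := by
    intro a b
    rw [show codeState U a = U.mulVec (ketX0 a) from rfl,
      show codeState U b = U.mulVec (ketX0 b) from rfl, traceA']
    have h := congrArg (fun A => (pauliString μ * (U * A * star U)).trace) (expandM a b)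
    simp only [Matrix.mul_sum, Matrix.sum_mul, Matrix.mul_smul, Matrix.smul_mul,
      Matrix.trace_sum, Matrix.trace_smul, smul_eq_mul] at h
    exact h
  have e1 : ∀ x' : Fin k → Fin 2,
      (2:ℂ)^(k+m) * (pauliString μ * (U * Matrix.vecMulVec (ketX0 x') (ketX0 x') * star U)).trace
        = ∑ ν : Fin k ⊕ Fin m → Fin 4,
            pauliString ν (Sum.elim x' 0) (Sum.elim x' 0)
              * (pauliString μ * (U * pauliString ν * star U)).trace := by
    intro x'
    rw [← traceA' U (pauliString μ) x' x']
    exact expandT x' x'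
  have expandId :
      (2:ℂ)^(k+m) * (pauliString μ * (U * idProjZero * star U)).trace
        = ∑ x' : Fin k → Fin 2, ∑ ν : Fin k ⊕ Fin m → Fin 4,
            pauliString ν (Sum.elim x' 0) (Sum.elim x' 0)
              * (pauliString μ * (U * pauliString ν * star U)).trace := by
    rw [idP']
    simp only [Matrix.mul_sum, Matrix.sum_mul, Matrix.trace_sum, Finset.mul_sum]
    exact Finset.sum_congr rfl fun x' _ => e1 x'
  -- the key per-ν identity
  have key : ∀ ν : Fin k ⊕ Fin m → Fin 4,
      (2:ℂ)^k * (pauliString ν (Sum.elim x 0) (Sum.elim y 0)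
          * (pauliString μ * (U * pauliString ν * star U)).trace)
        = (if x = y then 1 else 0)
          * ((∑ x' : Fin k → Fin 2, pauliString ν (Sum.elim x' 0) (Sum.elim x' 0))
              * (pauliString μ * (U * pauliString ν * star U)).trace) := by
    intro ν
    by_cases hB : ∀ j, ν (Sum.inr j) = 0 ∨ ν (Sum.inr j) = 3
    · by_cases hA : ν ∘ Sum.inl = 0
      · have hc : ∀ a b : Fin k → Fin 2, pauliString ν (Sum.elim a 0) (Sum.elim b 0)
            = (if a = b then 1 else 0) * ∏ j, pauli (ν (Sum.inr j)) 0 0 := by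
          intro a b
          show (∏ i : Fin k ⊕ Fin m, pauli (ν i) (Sum.elim a 0 i) (Sum.elim b 0 i)) = _
          rw [Fintype.prod_sum_type]
          simp only [Sum.elim_inl, Sum.elim_inr, Pi.zero_apply]
          congr 1
          rw [← prod_ite_eq_forall a b]
          apply Finset.prod_congr rfl
          intro i _
          have h0 : ν (Sum.inl i) = 0 := congrFun hA i
          rw [h0, pauli_zero_apply]
        simp only [hc, eq_self_iff_true, if_true, one_mul]
        rw [Finset.sum_const, Finset.card_univ]
        have hcard : Fintype.card (Fin k → Fin 2) = 2 ^ k := by simp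
        rw [hcard, nsmul_eq_mul]
        push_cast
        split_ifs <;> ring
      · have hν : Sum.elim (ν ∘ Sum.inl) (ν ∘ Sum.inr) = ν := by
          funext s; cases s <;> rfl
        have hT := hcond (ν ∘ Sum.inl) (ν ∘ Sum.inr) hA hB μ hw1 hw2
        rw [hν] at hT
        rw [hT]
        ring
    · push_neg at hB
      obtain ⟨j, hj0, hj3⟩ := hB
      have hz : ∀ a b : Fin k → Fin 2, pauliString ν (Sum.elim a 0) (Sum.elim b 0) = 0 := by
        intro a b
        show (∏ i : Fin k ⊕ Fin m, pauli (ν i) (Sum.elim a 0 i) (Sum.elim b 0 i)) = 0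
        apply Finset.prod_eq_zero (Finset.mem_univ (Sum.inr j))
        simp only [Sum.elim_inr, Pi.zero_apply]
        exact pauli_bad _ hj0 hj3
      simp [hz]
  -- assemble
  have main : (2:ℂ)^k * ((2:ℂ)^(k+m)
        * (star (codeState U x) ⬝ᵥ (pauliString μ).mulVec (codeState U y)))
      = (if x = y then 1 else 0)
        * ((2:ℂ)^(k+m) * (pauliString μ * (U * idProjZero * star U)).trace) := by
    rw [expandT x y, expandId, Finset.mul_sum]
    conv_rhs => rw [Finset.sum_comm]
    rw [Finset.mul_sum]
    apply Finset.sum_congr rfl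
    intro ν _
    rw [← Finset.sum_mul]
    exact key ν
  have h2n : ((2:ℂ)^(k+m)) ≠ 0 := pow_ne_zero _ two_ne_zero
  have h2k : ((2:ℂ)^k) ≠ 0 := pow_ne_zero _ two_ne_zero
  by_cases hxy : x = y
  · rw [if_pos hxy]
    rw [if_pos hxy, one_mul] at main
    have h3 : (2:ℂ)^(k+m) * ((2:ℂ)^k
          * (star (codeState U x) ⬝ᵥ (pauliString μ).mulVec (codeState U y)))
        = (2:ℂ)^(k+m) * (pauliString μ * (U * idProjZero * star U)).trace := by
      rw [← main]; ring
    have h4 := mul_left_cancel₀ h2n h3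
    rw [_root_.zpow_neg, zpow_natCast, ← h4, inv_mul_cancel_left₀ h2k]
  · rw [if_neg hxy]
    rw [if_neg hxy, zero_mul] at main
    have := mul_eq_zero.mp main
    rcases this with h | h
    · exact absurd h h2k
    · rcases mul_eq_zero.mp h with h' | h'
      · exact absurd h' h2n
      · exact h'
end
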